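/- Let λ : [0,∞) → ℝ be continuous with λ(t) ∈ [λ_min, λ_max], 0 < λ_min ≤ λ_max, and let γ solve γ̇ = λ − γ² with initial condition γ(0) > 0. Then γ(t) > 0 and γ is finite for all t ≥ 0, and √λ_min ≤ liminf_{t→∞} γ(t) ≤ limsup_{t→∞} γ(t) ≤ √λ_max. -/

import Mathlib

open Filter Set

lemma barrier_lower {f d : ℝ → ℝ} {s a : ℝ}
    (hd : ∀ t ∈ Set.Ici s, HasDerivAt f (d t) t)
    (hbar : ∀ t ∈ Set.Ici s, f t = a → 0 < d t)
    (h0 : a < f s) : ∀ t ∈ Set.Ici s, a < f t := by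
  by_contra h
  push_neg at h
  obtain ⟨t₀, ht₀, hft₀⟩ := h
  have hc : ∀ t ∈ Set.Ici s, ContinuousAt f t := fun t ht => (hd t ht).continuousAt
  set S : Set ℝ := Set.Icc s t₀ ∩ f ⁻¹' Set.Iic a with hS
  have hScl : IsClosed S :=
    ContinuousOn.preimage_isClosed_of_isClosed
      (fun t ht => (hc t ht.1).continuousWithinAt) isClosed_Icc isClosed_Iic
  have hSne : S.Nonempty := ⟨t₀, ⟨ht₀, le_refl _⟩, hft₀⟩
  have hSbdd : BddBelow S := ⟨s, fun t ht => ht.1.1⟩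
  set T := sInf S with hT
  have hTS : T ∈ S := hScl.csInf_mem hSne hSbdd
  have hTs : s ≤ T := hTS.1.1
  have hsT : s < T := by
    rcases eq_or_lt_of_le hTs with h' | h'
    · exact absurd (hTS.2 : f T ≤ a) (by rw [← h']; exact not_le.mpr h0)
    · exact h'
  have hbefore : ∀ t, s ≤ t → t < T → a < f t := by
    intro t hts htT
    by_contra hle
    exact absurd (csInf_le hSbdd ⟨⟨hts, htT.le.trans hTS.1.2⟩, not_lt.mp hle⟩) (not_le.mpr htT)
  have hfa : f T = a := by
    refine le_antisymm hTS.2 ?_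
    have htend : Tendsto f (nhdsWithin T (Set.Iio T)) (nhds (f T)) :=
      ((hc T hTs).continuousWithinAt).tendsto
    have hev : ∀ᶠ t in nhdsWithin T (Set.Iio T), a ≤ f t := by
      filter_upwards [Ioo_mem_nhdsLT_of_mem ⟨hsT, le_refl T⟩] with t ht
      exact (hbefore t ht.1.le ht.2).le
    exact ge_of_tendsto htend hev
  have hdT : 0 < d T := hbar T hTs hfa
  have hslope : Tendsto (slope f T) (nhdsWithin T {T}ᶜ) (nhds (d T)) :=
    hasDerivAt_iff_tendsto_slope.mp (hd T hTs)
  have hslope' : Tendsto (slope f T) (nhdsWithin T (Set.Iio T)) (nhds (d T)) :=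
    hslope.mono_left (nhdsWithin_mono _ (fun x hx => ne_of_lt hx))
  have hev2 : ∀ᶠ t in nhdsWithin T (Set.Iio T), 0 < slope f T t :=
    hslope'.eventually (eventually_gt_nhds hdT)
  have hev3 : ∀ᶠ t in nhdsWithin T (Set.Iio T), t ∈ Set.Ioo s T :=
    Ioo_mem_nhdsLT_of_mem ⟨hsT, le_refl T⟩
  have : ∀ᶠ t in nhdsWithin T (Set.Iio T), False := by
    filter_upwards [hev2, hev3] with t hslt ht
    have htT : t - T < 0 := sub_neg.mpr ht.2
    have hlt : f t - f T < 0 := by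
      by_contra hge
      push_neg at hge
      have : slope f T t ≤ 0 := by
        rw [slope_def_field]
        exact div_nonpos_of_nonneg_of_nonpos hge htT.le
      exact absurd hslt (not_lt.mpr this)
    have : f t < a := by rw [← hfa]; linarith
    exact absurd (hbefore t ht.1.le ht.2) (not_lt.mpr this.le)
  exact this.exists.elim (fun _ hf => hf)

lemma grow_lower {f d : ℝ → ℝ} {c τ : ℝ} (hτ : 0 ≤ τ)
    (hd : ∀ t ∈ Set.Icc 0 τ, HasDerivAt f (d t) t)
    (hc : ∀ t ∈ Set.Icc 0 τ, c ≤ d t) :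
    f 0 + c * τ ≤ f τ := by
  set g : ℝ → ℝ := fun t => f t - c * t with hg
  have hdg : ∀ t ∈ Set.Icc 0 τ, HasDerivAt g (d t - c) t := by
    intro t ht
    have h := (hd t ht).sub ((hasDerivAt_id t).const_mul c)
    rw [mul_one] at h
    exact h
  have hmono : MonotoneOn g (Set.Icc 0 τ) := by
    apply monotoneOn_of_deriv_nonneg (convex_Icc 0 τ)
    · exact fun t ht => (hdg t ht).continuousAt.continuousWithinAt
    · intro t ht
      rw [interior_Icc] at ht
      exact (hdg t ⟨ht.1.le, ht.2.le⟩).differentiableAt.differentiableWithinAt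
    · intro t ht
      rw [interior_Icc] at ht
      rw [(hdg t ⟨ht.1.le, ht.2.le⟩).deriv]
      exact sub_nonneg.mpr (hc t ⟨ht.1.le, ht.2.le⟩)
  have := hmono ⟨le_refl 0, hτ⟩ ⟨hτ, le_refl τ⟩ hτ
  simp only [hg] at this
  linarith


/-- If `γ` solves `γ' = λ − γ²` on `[0,∞)` with `γ(0) > 0`, where `lam` is
continuous with values in `[lmin, lmax]`, `0 < lmin ≤ lmax`, then `γ` is positive (hence
finite) at all times and `√lmin ≤ liminf γ ≤ limsup γ ≤ √lmax`. -/
theorem riccati_gamma_bounds (lam γ : ℝ → ℝ) (lmin lmax : ℝ)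
    (hmin : 0 < lmin) (hminmax : lmin ≤ lmax)
    (hlam_cont : ContinuousOn lam (Set.Ici 0))
    (hlam_mem : ∀ t ∈ Set.Ici (0 : ℝ), lam t ∈ Set.Icc lmin lmax)
    (hode : ∀ t ∈ Set.Ici (0 : ℝ), HasDerivAt γ (lam t - γ t ^ 2) t)
    (hinit : 0 < γ 0) :
    (∀ t ∈ Set.Ici (0 : ℝ), 0 < γ t) ∧
    Real.sqrt lmin ≤ Filter.liminf γ Filter.atTop ∧
    Filter.liminf γ Filter.atTop ≤ Filter.limsup γ Filter.atTop ∧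
    Filter.limsup γ Filter.atTop ≤ Real.sqrt lmax := by
  have hsl : 0 < Real.sqrt lmin := Real.sqrt_pos.mpr hmin
  set b₀ : ℝ := min (γ 0) (Real.sqrt lmin) / 2 with hb₀
  have hb₀pos : 0 < b₀ := by positivity
  have hb₀lt : b₀ < γ 0 :=
    lt_of_lt_of_le (half_lt_self (lt_min hinit hsl)) (min_le_left _ _)
  have hb₀lt' : b₀ < Real.sqrt lmin :=
    lt_of_lt_of_le (half_lt_self (lt_min hinit hsl)) (min_le_right _ _)
  have hb₀sq : b₀ ^ 2 < lmin := (Real.lt_sqrt hb₀pos.le).mp hb₀lt'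
  have hfloor : ∀ t ∈ Set.Ici (0:ℝ), b₀ < γ t := by
    refine barrier_lower hode (fun t ht heq => ?_) hb₀lt
    have := (hlam_mem t ht).1
    rw [heq]; nlinarith
  have hposall : ∀ t ∈ Set.Ici (0:ℝ), 0 < γ t :=
    fun t ht => hb₀pos.trans (hfloor t ht)
  -- upper attraction
  have hupper : ∀ a, Real.sqrt lmax < a → ∀ᶠ t in atTop, γ t < a := by
    intro a ha
    have ha0 : 0 < a := lt_of_le_of_lt (Real.sqrt_nonneg _) ha
    have hasq : lmax < a ^ 2 := (Real.sqrt_lt' ha0).mp ha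
    have hcpos : 0 < a ^ 2 - lmax := by linarith
    have hex : ∃ T, 0 ≤ T ∧ γ T < a := by
      by_contra hno
      push_neg at hno
      set τ : ℝ := max 0 ((γ 0 - a) / (a ^ 2 - lmax) + 1) with hτ
      have hτ0 : 0 ≤ τ := le_max_left _ _
      have key : (fun t => -γ t) 0 + (a ^ 2 - lmax) * τ ≤ (fun t => -γ t) τ := by
        refine grow_lower hτ0 (fun t ht => (hode t ht.1).neg) (fun t ht => ?_)
        have h1 := (hlam_mem t ht.1).2
        have h2 : a ≤ γ t := hno t ht.1
        nlinarith
      simp only at key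
      have h1 : (γ 0 - a) / (a ^ 2 - lmax) + 1 ≤ τ := le_max_right _ _
      have h2 : γ 0 - a + (a ^ 2 - lmax) ≤ (a ^ 2 - lmax) * τ := by
        have := mul_le_mul_of_nonneg_left h1 hcpos.le
        rw [mul_add, mul_one, mul_div_cancel₀ _ (ne_of_gt hcpos)] at this
        linarith
      have := hno τ hτ0
      linarith
    obtain ⟨T, hT0, hTa⟩ := hex
    have hinv : ∀ t ∈ Set.Ici T, -a < -γ t := by
      refine barrier_lower (f := fun t => -γ t) (d := fun t => -(lam t - γ t ^ 2))
        (fun t ht => (hode t (le_trans hT0 ht)).neg) (fun t ht heq => ?_)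
        (neg_lt_neg hTa)
      have hga : γ t = a := by linarith [neg_eq_iff_eq_neg.mp heq]
      have := (hlam_mem t (le_trans hT0 ht)).2
      show 0 < -(lam t - γ t ^ 2)
      rw [hga]; nlinarith
    exact eventually_atTop.mpr ⟨T, fun t ht => by have := hinv t ht; linarith⟩
  -- lower attraction
  have hlower : ∀ a, a < Real.sqrt lmin → ∀ᶠ t in atTop, a < γ t := by
    intro a ha
    by_cases hab : a ≤ b₀
    · exact eventually_atTop.mpr ⟨0, fun t ht => lt_of_le_of_lt hab (hfloor t ht)⟩
    push_neg at hab
    have ha0 : 0 < a := hb₀pos.trans hab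
    have hasq : a ^ 2 < lmin := (Real.lt_sqrt ha0.le).mp ha
    have hcpos : 0 < lmin - a ^ 2 := by linarith
    have hex : ∃ T, 0 ≤ T ∧ a < γ T := by
      by_contra hno
      push_neg at hno
      set τ : ℝ := max 0 ((a - γ 0) / (lmin - a ^ 2) + 1) with hτ
      have hτ0 : 0 ≤ τ := le_max_left _ _
      have key : γ 0 + (lmin - a ^ 2) * τ ≤ γ τ := by
        refine grow_lower hτ0 (fun t ht => hode t ht.1) (fun t ht => ?_)
        have h1 := (hlam_mem t ht.1).1
        have h2 : γ t ≤ a := hno t ht.1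
        have h3 : 0 < γ t := hposall t ht.1
        nlinarith
      have h1 : (a - γ 0) / (lmin - a ^ 2) + 1 ≤ τ := le_max_right _ _
      have h2 : a - γ 0 + (lmin - a ^ 2) ≤ (lmin - a ^ 2) * τ := by
        have := mul_le_mul_of_nonneg_left h1 hcpos.le
        rw [mul_add, mul_one, mul_div_cancel₀ _ (ne_of_gt hcpos)] at this
        linarith
      have := hno τ hτ0
      linarith
    obtain ⟨T, hT0, hTa⟩ := hex
    have hinv : ∀ t ∈ Set.Ici T, a < γ t := by
      refine barrier_lower (fun t ht => hode t (le_trans hT0 ht)) (fun t ht heq => ?_) hTa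
      have := (hlam_mem t (le_trans hT0 ht)).1
      rw [heq]; nlinarith
    exact eventually_atTop.mpr ⟨T, hinv⟩
  -- assembly
  have hub : ∀ᶠ t in atTop, γ t ≤ Real.sqrt lmax + 1 :=
    (hupper _ (lt_add_one _)).mono fun t ht => ht.le
  have hlb : ∀ᶠ t in atTop, b₀ ≤ γ t :=
    eventually_atTop.mpr ⟨0, fun t ht => (hfloor t ht).le⟩
  have hbdd_le : IsBoundedUnder (· ≤ ·) atTop γ := ⟨Real.sqrt lmax + 1, hub⟩
  have hbdd_ge : IsBoundedUnder (· ≥ ·) atTop γ := ⟨b₀, hlb⟩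
  have hcob_le : IsCoboundedUnder (· ≤ ·) atTop γ := hbdd_ge.isCoboundedUnder_flip
  have hcob_ge : IsCoboundedUnder (· ≥ ·) atTop γ := hbdd_le.isCoboundedUnder_flip
  refine ⟨hposall, ?_, liminf_le_limsup hbdd_le hbdd_ge, ?_⟩
  · refine le_of_forall_pos_le_add fun ε hε => ?_
    have h := le_liminf_of_le hcob_ge
      ((hlower (Real.sqrt lmin - ε) (by linarith)).mono fun t ht => ht.le)
    linarith
  · refine le_of_forall_pos_le_add fun ε hε => ?_
    refine limsup_le_of_le hcob_le
      ((hupper (Real.sqrt lmax + ε) (by linarith)).mono fun t ht => ht.le)
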